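/- Any L-ensemble is a DPP: if S ~ DPP_L(L), i.e., Pr{S} = det(L_{S,S})/det(I+L), then for every T ⊆ [n], Pr{T ⊆ S} = det(K_{T,T}), where K = L(I+L)^{-1}. -/

import Mathlib

open Matrix

/-- The principal submatrix determinant `det(M_{T,T})`. -/
noncomputable def subdet {n : ℕ} (M : Matrix (Fin n) (Fin n) ℝ) (S : Finset (Fin n)) : ℝ :=
  (M.submatrix (fun i : {x // x ∈ S} => (i : Fin n)) (fun j : {x // x ∈ S} => (j : Fin n))).det

/-- If `N` agrees with `M` on rows in `S` and has standard basis rows elsewhere,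
then `det N = det (M_{S,S})`. -/
lemma det_rows_eq_subdet {n : ℕ} (M N : Matrix (Fin n) (Fin n) ℝ) (S : Finset (Fin n))
    (h1 : ∀ i, i ∈ S → N i = M i)
    (h2 : ∀ i, i ∉ S → N i = (1 : Matrix (Fin n) (Fin n) ℝ) i) :
    N.det = subdet M S := by
  classical
  let e : {x // x ∈ S} ⊕ {x // ¬ x ∈ S} ≃ Fin n := Equiv.sumCompl (· ∈ S)
  have key : N.submatrix e e =
      Matrix.fromBlocks
        (M.submatrix (fun i : {x // x ∈ S} => (i : Fin n)) (fun j : {x // x ∈ S} => (j : Fin n)))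
        (M.submatrix (fun i : {x // x ∈ S} => (i : Fin n)) (fun j : {x // ¬ x ∈ S} => (j : Fin n)))
        0 1 := by
    ext i j
    cases i with
    | inl i =>
      cases j with
      | inl j =>
        simp [e, Matrix.submatrix_apply, h1 i.1 i.2, Matrix.fromBlocks]
      | inr j =>
        simp [e, Matrix.submatrix_apply, h1 i.1 i.2, Matrix.fromBlocks]
    | inr i =>
      cases j with
      | inl j =>
        have hij : (i : Fin n) ≠ (j : Fin n) := by
          intro h
          exact i.2 (h ▸ j.2)
        simp [e, Matrix.submatrix_apply, h2 i.1 i.2, Matrix.fromBlocks, Matrix.one_apply, hij]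
      | inr j =>
        have : ((i : Fin n) = (j : Fin n)) ↔ i = j := by
          constructor
          · intro h; exact Subtype.ext h
          · intro h; exact congrArg _ h
        simp [e, Matrix.submatrix_apply, h2 i.1 i.2, Matrix.fromBlocks, Matrix.one_apply, this]
  calc N.det = (N.submatrix e e).det := (Matrix.det_submatrix_equiv_self e N).symm
    _ = _ := by rw [key, Matrix.det_fromBlocks_zero₂₁, Matrix.det_one, mul_one]; rfl

theorem lEnsemble_is_dpp {n : ℕ} (L : Matrix (Fin n) (Fin n) ℝ) (hL : L.PosSemidef) :
    ∀ T : Finset (Fin n),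
      ∑ S ∈ Finset.univ.filter (fun S => T ⊆ S),
          subdet L S / ((1 : Matrix (Fin n) (Fin n) ℝ) + L).det
        = subdet (L * ((1 : Matrix (Fin n) (Fin n) ℝ) + L)⁻¹) T := by
  classical
  intro T
  set A : Matrix (Fin n) (Fin n) ℝ := (1 : Matrix (Fin n) (Fin n) ℝ) + L with hAdef
  have hA : A.PosDef := Matrix.PosDef.add_posSemidef (Matrix.PosDef.one) hL
  have hdet : A.det ≠ 0 := hA.det_pos.ne'
  have hunit : IsUnit A.det := hdet.isUnit
  -- the diagonal "complement indicator" matrix D and "indicator" matrix E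
  set D : Matrix (Fin n) (Fin n) ℝ :=
    fun i j => if i ∈ T then 0 else (1 : Matrix (Fin n) (Fin n) ℝ) i j with hD
  set E : Matrix (Fin n) (Fin n) ℝ :=
    fun i j => if i ∈ T then (1 : Matrix (Fin n) (Fin n) ℝ) i j else 0 with hE
  -- Step 1: the numerator sum equals det (D + L)
  have expand : (D + L).det = ∑ s : Finset (Fin n), Matrix.det (s.piecewise D L : Matrix (Fin n) (Fin n) ℝ) :=
    (Matrix.detRowAlternating : (Fin n → ℝ) [⋀^Fin n]→ₗ[ℝ] ℝ).toMultilinearMap.map_add_univ D L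
  have term_zero : ∀ s : Finset (Fin n), ¬ (s ⊆ Tᶜ) →
      Matrix.det (s.piecewise D L : Matrix (Fin n) (Fin n) ℝ) = 0 := by
    intro s hs
    obtain ⟨i, his, hiT⟩ : ∃ i, i ∈ s ∧ i ∈ T := by
      by_contra h
      push_neg at h
      exact hs fun i hi => Finset.mem_compl.2 (h i hi)
    refine Matrix.det_eq_zero_of_row_eq_zero i fun j => ?_
    simp [Finset.piecewise, his, hD, hiT]
  have term_val : ∀ s : Finset (Fin n), s ⊆ Tᶜ →
      Matrix.det (s.piecewise D L : Matrix (Fin n) (Fin n) ℝ) = subdet L sᶜ := by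
    intro s hs
    refine det_rows_eq_subdet L _ sᶜ (fun i hi => ?_) (fun i hi => ?_)
    · rw [Finset.mem_compl] at hi
      exact Finset.piecewise_eq_of_notMem _ _ _ hi
    · rw [Finset.mem_compl, not_not] at hi
      have hiT : i ∉ T := Finset.mem_compl.1 (hs hi)
      simp only [Finset.piecewise, hi, if_true]
      funext j
      simp [hD, hiT]
  have sum_eq : ∑ S ∈ Finset.univ.filter (fun S => T ⊆ S), subdet L S = (D + L).det := by
    rw [expand]
    rw [← Finset.sum_filter_of_ne (p := fun s => s ⊆ Tᶜ)
      (f := fun s => Matrix.det (s.piecewise D L : Matrix (Fin n) (Fin n) ℝ))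
      (by intro s _ h; by_contra hc; exact h (term_zero s hc))]
    refine Finset.sum_nbij' (fun S => Sᶜ) (fun s => sᶜ) ?_ ?_ ?_ ?_ ?_
    · intro S hS
      simp only [Finset.mem_filter, Finset.mem_univ, true_and] at hS ⊢
      intro i hi
      rw [Finset.mem_compl] at hi ⊢
      exact fun h => hi (hS h)
    · intro s hs
      simp only [Finset.mem_filter, Finset.mem_univ, true_and] at hs ⊢
      intro i hi
      rw [Finset.mem_compl]
      exact fun h => Finset.mem_compl.1 (hs h) hi
    · intro S _; exact compl_compl S
    · intro s _; exact compl_compl s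
    · intro S hS
      simp only [Finset.mem_filter, Finset.mem_univ, true_and] at hS
      rw [term_val Sᶜ (by intro i hi; rw [Finset.mem_compl] at hi ⊢; exact fun h => hi (hS h)),
        compl_compl]
  -- Step 2: det (D + L) = A.det * subdet (L * A⁻¹) T
  have hDL : D + L = A - E := by
    funext i j
    rw [Matrix.add_apply, Matrix.sub_apply]
    by_cases hi : i ∈ T <;>
      simp [hD, hE, hAdef, Matrix.add_apply, Matrix.sub_apply, hi, add_comm]
  have hAinv : A * A⁻¹ = 1 := Matrix.mul_nonsing_inv A hunit
  have factor : A - E = A * ((1 : Matrix (Fin n) (Fin n) ℝ) - A⁻¹ * E) := by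
    rw [Matrix.mul_sub, mul_one, ← Matrix.mul_assoc, hAinv, Matrix.one_mul]
  have comm : ((1 : Matrix (Fin n) (Fin n) ℝ) - A⁻¹ * E).det
      = ((1 : Matrix (Fin n) (Fin n) ℝ) - E * A⁻¹).det := by
    have h1 : (1 : Matrix (Fin n) (Fin n) ℝ) - A⁻¹ * E = 1 + A⁻¹ * (-E) := by
      rw [Matrix.mul_neg, sub_eq_add_neg]
    have h2 : (1 : Matrix (Fin n) (Fin n) ℝ) - E * A⁻¹ = 1 + (-E) * A⁻¹ := by
      rw [Matrix.neg_mul, sub_eq_add_neg]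
    rw [h1, h2, Matrix.det_one_add_mul_comm]
  have hKrow : ((1 : Matrix (Fin n) (Fin n) ℝ) - E * A⁻¹).det
      = subdet ((1 : Matrix (Fin n) (Fin n) ℝ) - A⁻¹) T := by
    refine det_rows_eq_subdet _ _ T (fun i hi => ?_) (fun i hi => ?_)
    · funext j
      have : (E * A⁻¹) i j = A⁻¹ i j := by
        rw [Matrix.mul_apply]
        simp only [Matrix.mul_apply, hE, hi, if_true]
        rw [Finset.sum_eq_single i]
        · simp [Matrix.one_apply]
        · intro k _ hk
          simp [Matrix.one_apply, (Ne.symm hk)]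
        · intro h; exact absurd (Finset.mem_univ i) h
      simp [Matrix.sub_apply, this]
    · funext j
      have : (E * A⁻¹) i j = 0 := by
        rw [Matrix.mul_apply]
        simp only [Matrix.mul_apply, hE, hi, if_false]
        simp
      simp [Matrix.sub_apply, this]
  have hK : L * A⁻¹ = (1 : Matrix (Fin n) (Fin n) ℝ) - A⁻¹ := by
    have : L = A - 1 := by rw [hAdef, add_sub_cancel_left]
    rw [this, Matrix.sub_mul, hAinv, Matrix.one_mul]
  have step2 : (D + L).det = A.det * subdet (L * A⁻¹) T := by
    rw [hDL, factor, Matrix.det_mul, comm, hKrow, hK]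
  -- conclude
  rw [← Finset.sum_div, sum_eq, step2, mul_div_cancel_left₀ _ hdet]
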